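/- Let n ≥ 1 and θ ≥ 1/2. Then there exist t₀ > 0 and a constant C > 0 depending only on n and θ such that for all t ≥ t₀: C^{−1} t^{−(n+4θ−2)/(2θ)} ≤ ∫_{ℝⁿ} a(ξ)² e^{−t log(1+|ξ|^{2θ})} · sin²(|ξ|t)/|ξ|² dξ ≤ C t^{−(n+4θ−2)/(2θ)}, where a(ξ) = (1/2) log(1+|ξ|^{2θ}). -/

import Mathlib

open MeasureTheory Real Set

namespace Stmt18


noncomputable def f (p t r : ℝ) : ℝ :=
  ((1 / 2) * Real.log (1 + r ^ p)) ^ 2 * Real.exp (-t * Real.log (1 + r ^ p)) *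
    Real.sin (r * t) ^ 2 / r ^ 2

noncomputable def g (p : ℝ) (n : ℕ) (t r : ℝ) : ℝ := r ^ (n - 1) * f p t r

lemma f_nonneg (p t r : ℝ) : 0 ≤ f p t r := by
  unfold f; positivity

lemma g_nonneg (p : ℝ) (n : ℕ) (t r : ℝ) (hr : 0 ≤ r) : 0 ≤ g p n t r := by
  unfold g; have := f_nonneg p t r; positivity

lemma log_one_add_le {x : ℝ} (hx : 0 ≤ x) : Real.log (1 + x) ≤ x := by
  have := Real.log_le_sub_one_of_pos (show (0:ℝ) < 1 + x by linarith)
  linarith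

lemma half_le_log_one_add {x : ℝ} (hx : 0 ≤ x) (hx1 : x ≤ 1) : x / 2 ≤ Real.log (1 + x) := by
  have h1 : (0:ℝ) < 1 + x := by linarith
  have h2 := Real.one_sub_inv_le_log_of_pos h1
  have h3 : (1 + x) * (1 + x)⁻¹ = 1 := mul_inv_cancel₀ (ne_of_gt h1)
  nlinarith [inv_nonneg.mpr h1.le]

lemma log_one_add_nonneg {x : ℝ} (hx : 0 ≤ x) : 0 ≤ Real.log (1 + x) :=
  Real.log_nonneg (by linarith)

lemma log_sq_le {y : ℝ} (hy : 1 ≤ y) : Real.log y ^ 2 ≤ 4 * y := by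
  have hy0 : (0:ℝ) < y := by linarith
  have h1 : Real.log (Real.sqrt y) = Real.log y / 2 := Real.log_sqrt hy0.le
  have h2 : Real.log (Real.sqrt y) ≤ Real.sqrt y - 1 :=
    Real.log_le_sub_one_of_pos (Real.sqrt_pos.mpr hy0)
  have h3 : Real.sqrt y ^ 2 = y := Real.sq_sqrt hy0.le
  have h4 : 0 ≤ Real.log y := Real.log_nonneg hy
  have h5 : 0 ≤ Real.sqrt y := Real.sqrt_nonneg y
  nlinarith

lemma continuousOn_f (p t : ℝ) : ContinuousOn (f p t) (Ioi 0) := by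
  have hrp : ContinuousOn (fun r : ℝ => r ^ p) (Ioi 0) := fun x hx =>
    (Real.continuousAt_rpow_const x p (Or.inl (ne_of_gt hx))).continuousWithinAt
  have hlog : ContinuousOn (fun r : ℝ => Real.log (1 + r ^ p)) (Ioi 0) := by
    apply ContinuousOn.log (continuousOn_const.add hrp)
    intro x hx
    have : (0:ℝ) < x ^ p := Real.rpow_pos_of_pos hx p
    exact ne_of_gt (show (0:ℝ) < 1 + x ^ p by linarith)
  have h1 : ContinuousOn (fun r : ℝ => ((1 / 2) * Real.log (1 + r ^ p)) ^ 2) (Ioi 0) :=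
    (continuousOn_const.mul hlog).pow 2
  have h2 : ContinuousOn (fun r : ℝ => Real.exp (-t * Real.log (1 + r ^ p))) (Ioi 0) :=
    (continuousOn_const.mul hlog).rexp
  have h3 : ContinuousOn (fun r : ℝ => Real.sin (r * t) ^ 2) (Ioi 0) :=
    ((continuous_sin.comp (continuous_id.mul continuous_const)).continuousOn).pow 2
  have h4 : ContinuousOn (fun r : ℝ => (r:ℝ) ^ 2) (Ioi 0) := (continuous_pow 2).continuousOn
  exact ((h1.mul h2).mul h3).div h4 (fun x hx => by
    have : (0:ℝ) < x := hx
    positivity)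

lemma continuousOn_g (p : ℝ) (n : ℕ) (t : ℝ) : ContinuousOn (g p n t) (Ioi 0) :=
  ((continuous_pow (n-1)).continuousOn).mul (continuousOn_f p t)

lemma measurable_g (p : ℝ) (n : ℕ) (t : ℝ) {s : Set ℝ} (hs : MeasurableSet s)
    (hsub : s ⊆ Ioi 0) : AEStronglyMeasurable (g p n t) (volume.restrict s) :=
  ((continuousOn_g p n t).mono hsub).aestronglyMeasurable hs



-- test small rpow facts
lemma rpow_mul_exp_le {x c q : ℝ} (hx : 1 ≤ x) (hc : 0 < c) (m : ℕ) (hq : q ≤ m) :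
    x ^ q * Real.exp (-(c * x)) ≤ m.factorial / c ^ m := by
  have hx0 : (0:ℝ) < x := lt_of_lt_of_le one_pos hx
  have h1 : x ^ q ≤ x ^ (m : ℝ) := Real.rpow_le_rpow_of_exponent_le hx hq
  rw [Real.rpow_natCast] at h1
  have h2 : (c * x) ^ m / (m.factorial : ℝ) ≤ Real.exp (c * x) :=
    Real.pow_div_factorial_le_exp _ (by positivity) m
  have hex : (0:ℝ) < Real.exp (c * x) := Real.exp_pos _
  have hcm : (0:ℝ) < c ^ m := by positivity
  have hfm : (0:ℝ) < (m.factorial : ℝ) := by positivity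
  rw [Real.exp_neg]
  have hxm : (0:ℝ) ≤ x ^ m := by positivity
  calc x ^ q * (Real.exp (c*x))⁻¹ ≤ x ^ m * (Real.exp (c*x))⁻¹ := by
        apply mul_le_mul_of_nonneg_right h1 (by positivity)
    _ ≤ m.factorial / c ^ m := by
        rw [mul_inv_le_iff₀ hex, div_mul_eq_mul_div, le_div_iff₀ hcm]
        calc x ^ m * c ^ m = (c * x) ^ m := by rw [mul_pow]; ring
          _ ≤ m.factorial * Real.exp (c*x) := by
              rw [div_le_iff₀ hfm] at h2; linarith

lemma continuousOn_gammaish (p q b : ℝ) :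
    ContinuousOn (fun r : ℝ => r ^ q * Real.exp (-(b * r ^ p))) (Ioi 0) := by
  have hrp : ∀ (e : ℝ), ContinuousOn (fun r : ℝ => r ^ e) (Ioi 0) := fun e x hx =>
    (Real.continuousAt_rpow_const x e (Or.inl (ne_of_gt hx))).continuousWithinAt
  exact (hrp q).mul ((continuousOn_const.mul (hrp p)).neg.rexp)

lemma integrableOn_gammaish {p q b : ℝ} (hp : 1 ≤ p) (hq : 0 ≤ q) (hb : 0 < b) :
    IntegrableOn (fun r : ℝ => r ^ q * Real.exp (-(b * r ^ p))) (Ioi 0) := by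
  have hmeas : ∀ s : Set ℝ, MeasurableSet s → s ⊆ Ioi 0 →
      AEStronglyMeasurable (fun r : ℝ => r ^ q * Real.exp (-(b * r ^ p)))
        (volume.restrict s) := fun s hs hsub =>
    ((continuousOn_gammaish p q b).mono hsub).aestronglyMeasurable hs
  rw [← Ioc_union_Ioi_eq_Ioi (zero_le_one (α := ℝ))]
  apply IntegrableOn.union
  · -- bounded by 1 on Ioc 0 1
    apply Integrable.mono' (integrableOn_const (C := (1:ℝ)) measure_Ioc_lt_top.ne)
      (hmeas _ measurableSet_Ioc (Ioc_subset_Ioi_self))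
    filter_upwards [ae_restrict_mem measurableSet_Ioc] with r hr
    have hr0 : 0 < r := hr.1
    have h1 : r ^ q ≤ 1 := Real.rpow_le_one hr0.le hr.2 hq
    have h2 : Real.exp (-(b * r ^ p)) ≤ 1 := by
      apply Real.exp_le_one_iff.mpr  -- maybe wrong name
      have : (0:ℝ) < r ^ p := Real.rpow_pos_of_pos hr0 p
      nlinarith
    have h0 : (0:ℝ) ≤ r ^ q := (Real.rpow_pos_of_pos hr0 q).le
    rw [Real.norm_eq_abs, abs_of_nonneg (by positivity)]
    nlinarith
  · -- exp decay on Ioi 1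
    set K : ℝ := (⌈q⌉₊.factorial : ℝ) / (b/2) ^ ⌈q⌉₊ with hK
    apply Integrable.mono' (((exp_neg_integrableOn_Ioi 1 (half_pos hb))).const_mul K)
      (hmeas _ measurableSet_Ioi (Ioi_subset_Ioi zero_le_one))
    filter_upwards [ae_restrict_mem measurableSet_Ioi] with r hr
    have hr1 : (1:ℝ) ≤ r := le_of_lt hr
    have hr0 : (0:ℝ) < r := lt_of_lt_of_le one_pos hr1
    have hrp : r ≤ r ^ p := by
      calc r = r ^ (1:ℝ) := (Real.rpow_one r).symm
        _ ≤ r ^ p := Real.rpow_le_rpow_of_exponent_le hr1 hp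
    have hsplit : Real.exp (-(b * r ^ p)) ≤ Real.exp (-(b/2 * r)) * Real.exp (-(b/2 * r)) := by
      rw [← Real.exp_add]
      apply Real.exp_le_exp.mpr
      nlinarith
    have hfac : r ^ q * Real.exp (-(b/2 * r)) ≤ K :=
      rpow_mul_exp_le hr1 (half_pos hb) ⌈q⌉₊ (Nat.le_ceil q)
    rw [Real.norm_eq_abs, abs_of_nonneg (by positivity)]
    have hrq : (0:ℝ) ≤ r ^ q := (Real.rpow_pos_of_pos hr0 q).le
    calc r ^ q * Real.exp (-(b * r ^ p)) ≤ r ^ q * (Real.exp (-(b/2*r)) * Real.exp (-(b/2*r))) :=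
          mul_le_mul_of_nonneg_left hsplit hrq
      _ = (r ^ q * Real.exp (-(b/2*r))) * Real.exp (-(b/2*r)) := by ring
      _ ≤ K * Real.exp (-(b/2*r)) := mul_le_mul_of_nonneg_right hfac (Real.exp_pos _).le
      _ = K * Real.exp (-(b/2)*r) := by ring_nf



lemma g_eq {p t r : ℝ} {n : ℕ} (hn : 1 ≤ n) (hr : 0 < r) :
    g p n t r = r ^ ((n : ℝ) - 3) *
      (((1 / 2) * Real.log (1 + r ^ p)) ^ 2 * Real.exp (-t * Real.log (1 + r ^ p)) *
        Real.sin (r * t) ^ 2) := by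
  have h1 : (r:ℝ) ^ (n - 1) = r ^ ((n : ℝ) - 1) := by
    rw [← Real.rpow_natCast r (n - 1), Nat.cast_sub hn, Nat.cast_one]
  have h2 : (r:ℝ) ^ (2:ℕ) = r ^ (2:ℝ) := by
    rw [← Real.rpow_natCast r 2]; norm_num
  have h3 : r ^ ((n:ℝ) - 3) = r ^ ((n:ℝ) - 1) * (r ^ (2:ℝ))⁻¹ := by
    rw [← Real.rpow_neg hr.le, ← Real.rpow_add hr]; congr 1; ring
  unfold g f
  rw [h1, h2, div_eq_mul_inv, h3]; ring

-- bound on (0,1]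
lemma g_le_mid {p t r : ℝ} {n : ℕ} (hn : 1 ≤ n) (hp : 1 ≤ p) (ht : 0 ≤ t)
    (hr : r ∈ Ioc (0:ℝ) 1) :
    g p n t r ≤ (1/4) * (r ^ ((n:ℝ) - 3 + 2*p) * Real.exp (-(t/2 * r ^ p))) := by
  obtain ⟨hr0, hr1⟩ := hr
  have hs0 : (0:ℝ) < r ^ p := Real.rpow_pos_of_pos hr0 p
  have hs1 : r ^ p ≤ 1 := Real.rpow_le_one hr0.le hr1 (by linarith)
  have hL0 : 0 ≤ Real.log (1 + r ^ p) := Real.log_nonneg (by linarith)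
  have hLle : Real.log (1 + r ^ p) ≤ r ^ p := by
    have := Real.log_le_sub_one_of_pos (show (0:ℝ) < 1 + r ^ p by linarith); linarith
  have hLge : r ^ p / 2 ≤ Real.log (1 + r ^ p) := by
    have h1 : (0:ℝ) < 1 + r ^ p := by linarith
    have h2 := Real.one_sub_inv_le_log_of_pos h1
    have h3 : (1 + r ^ p) * (1 + r ^ p)⁻¹ = 1 := mul_inv_cancel₀ (ne_of_gt h1)
    nlinarith [inv_nonneg.mpr h1.le]
  have hrn : (0:ℝ) ≤ r ^ ((n:ℝ) - 3) := (Real.rpow_pos_of_pos hr0 _).le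
  rw [g_eq hn hr0]
  have hb1 : ((1/2) * Real.log (1 + r ^ p)) ^ 2 ≤ (1/4) * (r ^ p) ^ 2 := by nlinarith
  have hb2 : Real.exp (-t * Real.log (1 + r ^ p)) ≤ Real.exp (-(t/2 * r ^ p)) := by
    apply Real.exp_le_exp.mpr; nlinarith
  have hb3 : Real.sin (r * t) ^ 2 ≤ 1 := by
    have := Real.neg_one_le_sin (r * t); have := Real.sin_le_one (r * t); nlinarith
  have hexp : (0:ℝ) < Real.exp (-(t/2 * r ^ p)) := Real.exp_pos _
  have step : ((1/2) * Real.log (1 + r ^ p)) ^ 2 * Real.exp (-t * Real.log (1 + r ^ p)) *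
      Real.sin (r * t) ^ 2 ≤ (1/4) * (r ^ p) ^ 2 * Real.exp (-(t/2 * r ^ p)) := by
    have h0 : (0:ℝ) ≤ ((1/2) * Real.log (1 + r ^ p)) ^ 2 := sq_nonneg _
    have h4 : ((1/2) * Real.log (1 + r ^ p)) ^ 2 * Real.exp (-t * Real.log (1 + r ^ p)) ≤
        (1/4) * (r ^ p) ^ 2 * Real.exp (-(t/2 * r ^ p)) := by
      apply mul_le_mul hb1 hb2 (Real.exp_pos _).le (by positivity)
    have hx0 : (0:ℝ) ≤ ((1/2) * Real.log (1 + r ^ p)) ^ 2 *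
        Real.exp (-t * Real.log (1 + r ^ p)) := by positivity
    calc ((1/2) * Real.log (1 + r ^ p)) ^ 2 * Real.exp (-t * Real.log (1 + r ^ p)) *
          Real.sin (r * t) ^ 2
        ≤ ((1/2) * Real.log (1 + r ^ p)) ^ 2 * Real.exp (-t * Real.log (1 + r ^ p)) * 1 :=
          mul_le_mul_of_nonneg_left hb3 hx0
      _ = ((1/2) * Real.log (1 + r ^ p)) ^ 2 * Real.exp (-t * Real.log (1 + r ^ p)) := by ring
      _ ≤ (1/4) * (r ^ p) ^ 2 * Real.exp (-(t/2 * r ^ p)) := h4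
  calc r ^ ((n:ℝ) - 3) * (((1/2) * Real.log (1 + r ^ p)) ^ 2 *
        Real.exp (-t * Real.log (1 + r ^ p)) * Real.sin (r * t) ^ 2)
      ≤ r ^ ((n:ℝ) - 3) * ((1/4) * (r ^ p) ^ 2 * Real.exp (-(t/2 * r ^ p))) :=
        mul_le_mul_of_nonneg_left step hrn
    _ = (1/4) * (r ^ ((n:ℝ) - 3 + 2*p) * Real.exp (-(t/2 * r ^ p))) := by
        rw [Real.rpow_add hr0, ← Real.rpow_natCast (r ^ p) 2, ← Real.rpow_mul hr0.le]
        push_cast; ring_nf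

-- bound on (1,∞)
lemma g_le_tail {p t r : ℝ} {n : ℕ} (hn : 1 ≤ n) (hp : 1 ≤ p)
    (ht : (n:ℝ) + 2 ≤ t) (hr : 1 < r) :
    g p n t r ≤ 2 * (2:ℝ) ^ (((n:ℝ)+2) - t) * r ^ ((n:ℝ) - 3 + p - p * ((n:ℝ)+2)) := by
  set T : ℝ := (n:ℝ) + 2 with hT
  have hr0 : (0:ℝ) < r := lt_trans one_pos hr
  have hs1 : (1:ℝ) ≤ r ^ p := Real.one_le_rpow hr.le (by linarith)
  have hy2 : (2:ℝ) ≤ 1 + r ^ p := by linarith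
  have hy0 : (0:ℝ) < 1 + r ^ p := by linarith
  have hL0 : 0 ≤ Real.log (1 + r ^ p) := Real.log_nonneg (by linarith)
  -- log² ≤ 4(1+r^p) ≤ 8 r^p
  have hlogsq : Real.log (1 + r ^ p) ^ 2 ≤ 8 * r ^ p := by
    have h1 : Real.log (Real.sqrt (1 + r ^ p)) = Real.log (1 + r ^ p) / 2 :=
      Real.log_sqrt hy0.le
    have h2 : Real.log (Real.sqrt (1 + r ^ p)) ≤ Real.sqrt (1 + r ^ p) - 1 :=
      Real.log_le_sub_one_of_pos (Real.sqrt_pos.mpr hy0)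
    have h3 : Real.sqrt (1 + r ^ p) ^ 2 = 1 + r ^ p := Real.sq_sqrt hy0.le
    have h5 : 0 ≤ Real.sqrt (1 + r ^ p) := Real.sqrt_nonneg _
    nlinarith
  -- exp(-tL) = (1+r^p)^(-t)
  have hexpL : Real.exp (-t * Real.log (1 + r ^ p)) = (1 + r ^ p) ^ (-t) := by
    rw [Real.rpow_def_of_pos hy0]; ring_nf
  have hTt : 0 ≤ t - T := by linarith
  have hsplit : (1 + r ^ p) ^ (-t) = (1 + r ^ p) ^ (-(t-T)) * (1 + r ^ p) ^ (-T) := by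
    rw [← Real.rpow_add hy0]; ring_nf
  have hpart1 : (1 + r ^ p) ^ (-(t-T)) ≤ (2:ℝ) ^ (T - t) := by
    rw [Real.rpow_neg hy0.le, show T - t = -(t-T) by ring, Real.rpow_neg (by norm_num : (0:ℝ) ≤ 2)]
    apply inv_anti₀ (Real.rpow_pos_of_pos two_pos _)
    exact Real.rpow_le_rpow (by norm_num) hy2 hTt
  have hpart2 : (1 + r ^ p) ^ (-T) ≤ (r ^ p) ^ (-T) := by
    rw [Real.rpow_neg hy0.le, Real.rpow_neg (by positivity)]
    apply inv_anti₀ (Real.rpow_pos_of_pos (by linarith) _)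
    exact Real.rpow_le_rpow (by positivity) (by linarith) (by positivity)
  have hsin : Real.sin (r * t) ^ 2 ≤ 1 := by
    have := Real.neg_one_le_sin (r * t); have := Real.sin_le_one (r * t); nlinarith
  rw [g_eq hn hr0]
  have hrn : (0:ℝ) ≤ r ^ ((n:ℝ) - 3) := (Real.rpow_pos_of_pos hr0 _).le
  have key : ((1/2) * Real.log (1 + r ^ p)) ^ 2 * Real.exp (-t * Real.log (1 + r ^ p)) *
      Real.sin (r * t) ^ 2 ≤ 2 * r ^ p * ((2:ℝ) ^ (T - t) * (r ^ p) ^ (-T)) := by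
    have e1 : ((1/2) * Real.log (1 + r ^ p)) ^ 2 ≤ 2 * r ^ p := by nlinarith
    have e2 : Real.exp (-t * Real.log (1 + r ^ p)) ≤ (2:ℝ) ^ (T - t) * (r ^ p) ^ (-T) := by
      rw [hexpL, hsplit]
      apply mul_le_mul hpart1 hpart2 (Real.rpow_pos_of_pos hy0 _).le
        (Real.rpow_pos_of_pos two_pos _).le
    have e0 : (0:ℝ) ≤ ((1/2) * Real.log (1 + r ^ p)) ^ 2 := sq_nonneg _
    have e3 : (0:ℝ) ≤ (2:ℝ) ^ (T - t) * (r ^ p) ^ (-T) := by positivity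
    have e4 : ((1/2) * Real.log (1 + r ^ p)) ^ 2 * Real.exp (-t * Real.log (1 + r ^ p)) ≤
        (2 * r ^ p) * ((2:ℝ) ^ (T - t) * (r ^ p) ^ (-T)) :=
      mul_le_mul e1 e2 (Real.exp_pos _).le (by positivity)
    have hx0 : (0:ℝ) ≤ ((1/2) * Real.log (1 + r ^ p)) ^ 2 *
        Real.exp (-t * Real.log (1 + r ^ p)) := by positivity
    calc ((1/2) * Real.log (1 + r ^ p)) ^ 2 * Real.exp (-t * Real.log (1 + r ^ p)) *
          Real.sin (r * t) ^ 2
        ≤ ((1/2) * Real.log (1 + r ^ p)) ^ 2 * Real.exp (-t * Real.log (1 + r ^ p)) * 1 :=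
          mul_le_mul_of_nonneg_left hsin hx0
      _ = ((1/2) * Real.log (1 + r ^ p)) ^ 2 * Real.exp (-t * Real.log (1 + r ^ p)) := by ring
      _ ≤ 2 * r ^ p * ((2:ℝ) ^ (T - t) * (r ^ p) ^ (-T)) := e4
  calc r ^ ((n:ℝ) - 3) * (((1/2) * Real.log (1 + r ^ p)) ^ 2 *
        Real.exp (-t * Real.log (1 + r ^ p)) * Real.sin (r * t) ^ 2)
      ≤ r ^ ((n:ℝ) - 3) * (2 * r ^ p * ((2:ℝ) ^ (T - t) * (r ^ p) ^ (-T))) :=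
        mul_le_mul_of_nonneg_left key hrn
    _ = 2 * (2:ℝ) ^ (T - t) * r ^ ((n:ℝ) - 3 + p - p * T) := by
        rw [← Real.rpow_mul hr0.le p (-T), show (n:ℝ) - 3 + p - p * T =
          ((n:ℝ) - 3) + p + p * (-T) by ring, Real.rpow_add hr0, Real.rpow_add hr0]
        ring



section
variable {p : ℝ} {n : ℕ} (hn : 1 ≤ n) (hp : 1 ≤ p)

include hn hp in
lemma exponent_nonneg : 0 ≤ (n:ℝ) - 3 + 2*p := by
  have : (1:ℝ) ≤ n := by exact_mod_cast hn
  linarith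

include hn hp in
lemma tail_exp_lt : (n:ℝ) - 3 + p - p * ((n:ℝ)+2) < -1 := by
  have h1 : (1:ℝ) ≤ n := by exact_mod_cast hn
  nlinarith

include hn hp in
lemma integrableOn_g {t : ℝ} (ht : (n:ℝ) + 2 ≤ t) : IntegrableOn (g p n t) (Ioi 0) := by
  have ht0 : (0:ℝ) < t := by
    have hcast : (1:ℝ) ≤ n := by exact_mod_cast hn
    linarith
  rw [← Ioc_union_Ioi_eq_Ioi (zero_le_one (α := ℝ))]
  apply IntegrableOn.union
  · apply Integrable.mono' (integrableOn_const (C := (1:ℝ)/4) measure_Ioc_lt_top.ne)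
      (measurable_g p n t measurableSet_Ioc Ioc_subset_Ioi_self)
    filter_upwards [ae_restrict_mem measurableSet_Ioc] with r hr
    rw [Real.norm_eq_abs, abs_of_nonneg (g_nonneg p n t r hr.1.le)]
    have h1 := g_le_mid hn hp ht0.le hr
    have h2 : r ^ ((n:ℝ) - 3 + 2*p) ≤ 1 :=
      Real.rpow_le_one hr.1.le hr.2 (exponent_nonneg hn hp)
    have h3 : Real.exp (-(t/2 * r ^ p)) ≤ 1 := by
      rw [Real.exp_le_one_iff]
      have : (0:ℝ) < r ^ p := Real.rpow_pos_of_pos hr.1 p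
      nlinarith
    have h4 : (0:ℝ) < r ^ ((n:ℝ) - 3 + 2*p) := Real.rpow_pos_of_pos hr.1 _
    nlinarith [Real.exp_pos (-(t/2 * r ^ p))]
  · apply Integrable.mono'
      (((integrableOn_Ioi_rpow_of_lt (tail_exp_lt hn hp) one_pos)).const_mul
        (2 * (2:ℝ) ^ (((n:ℝ)+2) - t)))
      (measurable_g p n t measurableSet_Ioi (Ioi_subset_Ioi zero_le_one))
    filter_upwards [ae_restrict_mem measurableSet_Ioi] with r hr
    rw [Real.norm_eq_abs, abs_of_nonneg (g_nonneg p n t r (by linarith [mem_Ioi.mp hr]))]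
    have := g_le_tail hn hp ht hr
    linarith [this]

include hn hp in
lemma upper_bound : ∃ M > (0:ℝ), ∀ t : ℝ, max 1 ((n:ℝ) + 2) ≤ t →
    ∫ r in Ioi (0:ℝ), g p n t r ≤ M * t ^ (-(((n:ℝ) + 2*p - 2)/p)) := by
  have hn1 : (1:ℝ) ≤ n := by exact_mod_cast hn
  have hp0 : (0:ℝ) < p := by linarith
  set γ : ℝ := ((n:ℝ) + 2*p - 2)/p with hγ
  have hγ0 : 0 < γ := by
    apply div_pos (by linarith) hp0
  have hγle : γ ≤ (n:ℝ) + 2 := by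
    rw [hγ, div_le_iff₀ hp0]; nlinarith
  set q : ℝ := (n:ℝ) - 3 + 2*p with hq
  have hq0 : 0 ≤ q := exponent_nonneg hn hp
  have hqγ : (q + 1)/p = γ := by rw [hq, hγ]; ring_nf
  set e : ℝ := (n:ℝ) - 3 + p - p * ((n:ℝ)+2) with he
  have he1 : e < -1 := tail_exp_lt hn hp
  set m : ℕ := n + 2 with hm
  -- constants
  set M₁ : ℝ := (1/4) * ((2:ℝ) ^ γ * (1/p) * Real.Gamma γ) with hM₁
  set M₂ : ℝ := 2 * (2:ℝ) ^ ((n:ℝ)+2) * (-1 / (e+1)) * (m.factorial / (Real.log 2) ^ m) with hM₂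
  have hlog2 : (0:ℝ) < Real.log 2 := Real.log_pos (by norm_num)
  have hM₁0 : 0 < M₁ := by
    have := Real.Gamma_pos_of_pos hγ0
    have h2 : (0:ℝ) < (2:ℝ) ^ γ := Real.rpow_pos_of_pos two_pos γ
    positivity
  have hM₂0 : 0 < M₂ := by
    have h1 : (0:ℝ) < -1/(e+1) := by
      apply div_pos_of_neg_of_neg (by norm_num) (by linarith)
    have h2 : (0:ℝ) < (2:ℝ) ^ ((n:ℝ)+2) := Real.rpow_pos_of_pos two_pos _
    have h3 : (0:ℝ) < (m.factorial : ℝ) := by positivity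
    have h4 : (0:ℝ) < (Real.log 2) ^ m := by positivity
    positivity
  refine ⟨M₁ + M₂, by positivity, ?_⟩
  intro t ht
  have ht1 : (1:ℝ) ≤ t := le_trans (le_max_left _ _) ht
  have htn : (n:ℝ) + 2 ≤ t := le_trans (le_max_right _ _) ht
  have ht0 : (0:ℝ) < t := by linarith
  have htγ : (0:ℝ) < t ^ (-γ) := Real.rpow_pos_of_pos ht0 _
  -- split domain
  have hIu : Ioc (0:ℝ) 1 ∪ Ioi 1 = Ioi (0:ℝ) := Ioc_union_Ioi_eq_Ioi zero_le_one
  have hint := integrableOn_g hn hp htn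
  have hint1 : IntegrableOn (g p n t) (Ioc 0 1) := hint.mono_set (by rw [← hIu]; exact subset_union_left)
  have hint2 : IntegrableOn (g p n t) (Ioi 1) := hint.mono_set (by rw [← hIu]; exact subset_union_right)
  have hsplit : ∫ r in Ioi (0:ℝ), g p n t r =
      (∫ r in Ioc (0:ℝ) 1, g p n t r) + ∫ r in Ioi (1:ℝ), g p n t r := by
    rw [← hIu, setIntegral_union (Ioc_disjoint_Ioi le_rfl) measurableSet_Ioi hint1 hint2]
  -- piece 1
  have hgamma_int : IntegrableOn (fun r : ℝ => r ^ q * Real.exp (-(t/2 * r ^ p))) (Ioi 0) :=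
    integrableOn_gammaish hp hq0 (by positivity)
  have hpiece1 : (∫ r in Ioc (0:ℝ) 1, g p n t r) ≤ M₁ * t ^ (-γ) := by
    have s1 : (∫ r in Ioc (0:ℝ) 1, g p n t r) ≤
        ∫ r in Ioc (0:ℝ) 1, (1/4) * (r ^ q * Real.exp (-(t/2 * r ^ p))) := by
      apply setIntegral_mono_on hint1 ((hgamma_int.mono_set Ioc_subset_Ioi_self).const_mul _)
        measurableSet_Ioc
      intro r hr
      have := g_le_mid hn hp ht0.le hr
      calc g p n t r ≤ (1/4) * (r ^ ((n:ℝ) - 3 + 2*p) * Real.exp (-(t/2 * r ^ p))) := this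
        _ = (1/4) * (r ^ q * Real.exp (-(t/2 * r ^ p))) := by rw [hq]
    have s2 : (∫ r in Ioc (0:ℝ) 1, (1/4) * (r ^ q * Real.exp (-(t/2 * r ^ p)))) ≤
        ∫ r in Ioi (0:ℝ), (1/4) * (r ^ q * Real.exp (-(t/2 * r ^ p))) := by
      apply setIntegral_mono_set (hgamma_int.const_mul _)
      · filter_upwards [ae_restrict_mem measurableSet_Ioi] with r hr
        have h1 : (0:ℝ) < r ^ q := Real.rpow_pos_of_pos hr _
        positivity
      · exact HasSubset.Subset.eventuallyLE Ioc_subset_Ioi_self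
    have s3 : (∫ r in Ioi (0:ℝ), (1/4) * (r ^ q * Real.exp (-(t/2 * r ^ p)))) = M₁ * t ^ (-γ) := by
      rw [integral_const_mul]
      have : (∫ r in Ioi (0:ℝ), r ^ q * Real.exp (-(t/2 * r ^ p))) =
          (t/2) ^ (-(q+1)/p) * (1/p) * Real.Gamma ((q+1)/p) := by
        rw [← integral_rpow_mul_exp_neg_mul_rpow hp0 (by linarith : (-1:ℝ) < q) (by positivity)]
        congr 1
        ext r
        rw [neg_mul]
      rw [this, hqγ]
      have hpow : (t/2) ^ (-γ) = (2:ℝ) ^ γ * t ^ (-γ) := by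
        rw [div_eq_mul_inv, Real.mul_rpow ht0.le (by norm_num), mul_comm]
        congr 1
        rw [Real.inv_rpow (by norm_num), Real.rpow_neg (by norm_num), inv_inv]
      rw [show -(q+1)/p = -((q+1)/p) by ring, hqγ, hpow, hM₁]
      ring
    linarith
  -- piece 2
  have hpiece2 : (∫ r in Ioi (1:ℝ), g p n t r) ≤ M₂ * t ^ (-γ) := by
    have s1 : (∫ r in Ioi (1:ℝ), g p n t r) ≤
        ∫ r in Ioi (1:ℝ), 2 * (2:ℝ) ^ (((n:ℝ)+2) - t) * r ^ e := by
      apply setIntegral_mono_on hint2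
        ((integrableOn_Ioi_rpow_of_lt he1 one_pos).const_mul _) measurableSet_Ioi
      intro r hr
      exact g_le_tail hn hp htn hr
    have s2 : (∫ r in Ioi (1:ℝ), 2 * (2:ℝ) ^ (((n:ℝ)+2) - t) * r ^ e) =
        2 * (2:ℝ) ^ (((n:ℝ)+2) - t) * (-1/(e+1)) := by
      rw [integral_const_mul, integral_Ioi_rpow_of_lt he1 one_pos, Real.one_rpow]
    -- 2 ^ ((n+2) - t) ≤ 2^(n+2) * (m!/(log2)^m) * t^(-γ)
    have hmγ : γ ≤ (m:ℕ) := by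
      have : ((m:ℕ):ℝ) = (n:ℝ) + 2 := by rw [hm]; push_cast; ring
      rw [this]; exact hγle
    have key : t ^ γ * Real.exp (-(Real.log 2 * t)) ≤ (m.factorial / (Real.log 2) ^ m) :=
      rpow_mul_exp_le ht1 hlog2 m hmγ
    have h2t : (2:ℝ) ^ (-t) = Real.exp (-(Real.log 2 * t)) := by
      rw [Real.rpow_def_of_pos two_pos]
      ring_nf
    have hcancel : t ^ (-γ) * t ^ γ = 1 := by
      rw [← Real.rpow_add ht0]; norm_num
    have s3 : (2:ℝ) ^ (-t) ≤ (m.factorial / (Real.log 2) ^ m) * t ^ (-γ) := by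
      rw [h2t]
      calc Real.exp (-(Real.log 2 * t)) = t ^ (-γ) * (t ^ γ * Real.exp (-(Real.log 2 * t))) := by
            rw [← mul_assoc, hcancel, one_mul]
        _ ≤ t ^ (-γ) * (m.factorial / (Real.log 2) ^ m) := by
            apply mul_le_mul_of_nonneg_left key htγ.le
        _ = (m.factorial / (Real.log 2) ^ m) * t ^ (-γ) := by ring
    have hsub : (2:ℝ) ^ (((n:ℝ)+2) - t) = (2:ℝ) ^ ((n:ℝ)+2) * (2:ℝ) ^ (-t) := by
      rw [← Real.rpow_add two_pos]; ring_nf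
    have hfin : 2 * (2:ℝ) ^ (((n:ℝ)+2) - t) * (-1/(e+1)) ≤ M₂ * t ^ (-γ) := by
      rw [hsub, hM₂]
      have h1 : (0:ℝ) < -1/(e+1) := div_pos_of_neg_of_neg (by norm_num) (by linarith)
      have h2 : (0:ℝ) < (2:ℝ) ^ ((n:ℝ)+2) := Real.rpow_pos_of_pos two_pos _
      have h3 : (0:ℝ) ≤ 2 * (2:ℝ) ^ ((n:ℝ)+2) * (-1/(e+1)) :=
        le_of_lt (mul_pos (mul_pos two_pos h2) h1)
      have hmul := mul_le_mul_of_nonneg_left s3 h3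
      calc 2 * ((2:ℝ) ^ ((n:ℝ)+2) * (2:ℝ) ^ (-t)) * (-1/(e+1))
          = 2 * (2:ℝ) ^ ((n:ℝ)+2) * (-1/(e+1)) * (2:ℝ) ^ (-t) := by ring
        _ ≤ 2 * (2:ℝ) ^ ((n:ℝ)+2) * (-1/(e+1)) *
            ((m.factorial : ℝ) / Real.log 2 ^ m * t ^ (-γ)) := hmul
        _ = 2 * (2:ℝ) ^ ((n:ℝ)+2) * (-1/(e+1)) *
            ((m.factorial : ℝ) / Real.log 2 ^ m) * t ^ (-γ) := by ring
    linarith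
  rw [hsplit]
  have : (M₁ + M₂) * t ^ (-(((n:ℝ) + 2*p - 2)/p)) = M₁ * t ^ (-γ) + M₂ * t ^ (-γ) := by
    rw [hγ]; ring
  rw [this]
  linarith

end


-- the sin² integral lower bound
lemma sin_sq_integral_lb {t α β : ℝ} (ht : 0 < t) (hαβ : α ≤ β) :
    (β - α)/2 - 1/t ≤ ∫ r in Ioc α β, Real.sin (r * t) ^ 2 := by
  have h1 : (∫ r in Ioc α β, Real.sin (r * t) ^ 2) = ∫ r in α..β, Real.sin (r * t) ^ 2 := by
    rw [intervalIntegral.integral_of_le hαβ]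
  have h2 : (∫ r in α..β, Real.sin (r * t) ^ 2) =
      t⁻¹ • ∫ u in α*t..β*t, Real.sin u ^ 2 :=
    intervalIntegral.integral_comp_mul_right (fun u => Real.sin u ^ 2) (ne_of_gt ht)
  rw [h1, h2, integral_sin_sq, smul_eq_mul]
  have e1 : |Real.sin (α*t) * Real.cos (α*t)| ≤ 1 := by
    rw [abs_mul]
    exact mul_le_one₀ (Real.abs_sin_le_one _) (abs_nonneg _) (Real.abs_cos_le_one _)
  have e2 : |Real.sin (β*t) * Real.cos (β*t)| ≤ 1 := by
    rw [abs_mul]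
    exact mul_le_one₀ (Real.abs_sin_le_one _) (abs_nonneg _) (Real.abs_cos_le_one _)
  have e1' := abs_le.mp e1
  have e2' := abs_le.mp e2
  have hnum : (β - α) * t / 2 - 1 ≤
      (Real.sin (α*t) * Real.cos (α*t) - Real.sin (β*t) * Real.cos (β*t) + β*t - α*t)/2 := by
    nlinarith
  have htinv : (0:ℝ) < t⁻¹ := inv_pos.mpr ht
  calc (β - α)/2 - 1/t = t⁻¹ * ((β - α) * t / 2 - 1) := by
        rw [show t⁻¹ * ((β - α) * t / 2 - 1) = (β - α)/2 * (t⁻¹ * t) - 1/t by ring,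
          inv_mul_cancel₀ (ne_of_gt ht), mul_one]
    _ ≤ t⁻¹ * ((Real.sin (α*t) * Real.cos (α*t) - Real.sin (β*t) * Real.cos (β*t) + β*t - α*t)/2) :=
        mul_le_mul_of_nonneg_left hnum htinv.le

-- pointwise lower bound on the annulus
lemma g_lb {p t r : ℝ} {n : ℕ} (hp : 1 ≤ p) (ht0 : 0 < t) {α β : ℝ}
    (hα0 : 0 < α) (hr : r ∈ Ioc α β) (hβp : β ^ p ≤ 1) (hβ1 : β ≤ 1)
    (hαβ : α ≤ β) :
    α ^ (n-1) * ((1/2) * (α ^ p / 2)) ^ 2 * Real.exp (-t * β ^ p) / β ^ 2 *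
      Real.sin (r * t) ^ 2 ≤ g p n t r := by
  obtain ⟨hr1, hr2⟩ := hr
  have hr0 : 0 < r := lt_trans hα0 hr1
  have hβ0 : 0 < β := lt_of_lt_of_le hr0 hr2
  have hp0 : (0:ℝ) < p := by linarith
  have hαp : (0:ℝ) < α ^ p := Real.rpow_pos_of_pos hα0 p
  have hrpα : α ^ p ≤ r ^ p := Real.rpow_le_rpow hα0.le hr1.le hp0.le
  have hrpβ : r ^ p ≤ β ^ p := Real.rpow_le_rpow hr0.le hr2 hp0.le
  have hrp1 : r ^ p ≤ 1 := le_trans hrpβ hβp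
  have hrp0 : (0:ℝ) < r ^ p := Real.rpow_pos_of_pos hr0 p
  have hL0 : 0 ≤ Real.log (1 + r ^ p) := Real.log_nonneg (by linarith)
  have hLge : r ^ p / 2 ≤ Real.log (1 + r ^ p) := by
    have h1 : (0:ℝ) < 1 + r ^ p := by linarith
    have h2 := Real.one_sub_inv_le_log_of_pos h1
    have h3 : (1 + r ^ p) * (1 + r ^ p)⁻¹ = 1 := mul_inv_cancel₀ (ne_of_gt h1)
    nlinarith [inv_nonneg.mpr h1.le]
  have hLle : Real.log (1 + r ^ p) ≤ r ^ p := by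
    have := Real.log_le_sub_one_of_pos (show (0:ℝ) < 1 + r ^ p by linarith); linarith
  -- factor bounds
  have f1 : α ^ (n-1) ≤ r ^ (n-1) := pow_le_pow_left₀ hα0.le hr1.le _
  have f2 : ((1/2) * (α ^ p / 2)) ^ 2 ≤ ((1/2) * Real.log (1 + r ^ p)) ^ 2 := by
    have h1 : (0:ℝ) ≤ (1/2) * (α ^ p / 2) := by positivity
    have h2 : (1/2) * (α ^ p / 2) ≤ (1/2) * Real.log (1 + r ^ p) := by nlinarith
    nlinarith
  have f3 : Real.exp (-t * β ^ p) ≤ Real.exp (-t * Real.log (1 + r ^ p)) := by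
    apply Real.exp_le_exp.mpr
    nlinarith
  have f4 : (β ^ (2:ℕ) : ℝ)⁻¹ ≤ ((r:ℝ) ^ (2:ℕ))⁻¹ := by
    apply inv_anti₀ (by positivity)
    nlinarith
  have hsin : (0:ℝ) ≤ Real.sin (r * t) ^ 2 := sq_nonneg _
  unfold g f
  rw [div_eq_mul_inv, div_eq_mul_inv]
  have c1 : (0:ℝ) ≤ α ^ (n-1) := by positivity
  have c2 : (0:ℝ) ≤ ((1/2) * (α ^ p / 2)) ^ 2 := sq_nonneg _
  have c3 : (0:ℝ) ≤ Real.exp (-t * β ^ p) := (Real.exp_pos _).le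
  have c4 : (0:ℝ) ≤ ((β:ℝ) ^ (2:ℕ))⁻¹ := by positivity
  have d1 : (0:ℝ) ≤ r ^ (n-1) := by positivity
  have d2 : (0:ℝ) ≤ ((1/2) * Real.log (1 + r ^ p)) ^ 2 := sq_nonneg _
  have d3 : (0:ℝ) ≤ Real.exp (-t * Real.log (1 + r ^ p)) := (Real.exp_pos _).le
  have d4 : (0:ℝ) ≤ ((r:ℝ) ^ (2:ℕ))⁻¹ := by positivity
  calc α ^ (n-1) * ((1/2) * (α ^ p / 2)) ^ 2 * Real.exp (-t * β ^ p) * (β ^ (2:ℕ) : ℝ)⁻¹ *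
        Real.sin (r * t) ^ 2
      ≤ r ^ (n-1) * (((1/2) * Real.log (1 + r ^ p)) ^ 2) * Real.exp (-t * Real.log (1 + r ^ p)) *
        ((r:ℝ) ^ (2:ℕ))⁻¹ * Real.sin (r * t) ^ 2 := by
        apply mul_le_mul_of_nonneg_right _ hsin
        apply mul_le_mul _ f4 (by positivity) (by positivity)
        apply mul_le_mul _ f3 c3 (by positivity)
        exact mul_le_mul f1 f2 c2 d1
    _ = r ^ (n-1) * (((1/2) * Real.log (1 + r ^ p)) ^ 2 * Real.exp (-t * Real.log (1 + r ^ p)) *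
        Real.sin (r * t) ^ 2 * ((r:ℝ) ^ (2:ℕ))⁻¹) := by ring



lemma tau_pow {t p : ℝ} (ht0 : 0 < t) (hp : 1 ≤ p) {n : ℕ} (hn : 1 ≤ n) :
    ((t ^ (-(1/p)) : ℝ))^(n-1) * ((t:ℝ)⁻¹)^2 * (t ^ (-(1/p))) / ((t ^ (-(1/p)) : ℝ))^2 =
      t ^ (-(((n:ℝ) + 2*p - 2)/p)) := by
  have hp0 : p ≠ 0 := by positivity
  have e1 : ((t ^ (-(1/p)) : ℝ))^(n-1) = t ^ ((-(1/p)) * ((n:ℝ)-1)) := by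
    rw [← Real.rpow_natCast (t ^ (-(1/p))) (n-1), ← Real.rpow_mul ht0.le]
    congr 1
    rw [Nat.cast_sub hn, Nat.cast_one]
  have e2 : ((t:ℝ)⁻¹)^2 = t ^ (-2 : ℝ) := by
    rw [← Real.rpow_neg_one t, ← Real.rpow_natCast (t ^ (-1:ℝ)) 2, ← Real.rpow_mul ht0.le]
    norm_num
  have e3 : ((t ^ (-(1/p)) : ℝ))^2 = t ^ ((-(1/p)) * 2) := by
    rw [← Real.rpow_natCast (t ^ (-(1/p))) 2, ← Real.rpow_mul ht0.le]
    norm_num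
  rw [e1, e2, e3, div_eq_mul_inv, ← Real.rpow_neg ht0.le, ← Real.rpow_add ht0,
    ← Real.rpow_add ht0, ← Real.rpow_add ht0]
  congr 1
  field_simp
  ring

lemma lower_bound {p : ℝ} {n : ℕ} (hn : 1 ≤ n) (hp : 1 ≤ p) :
    ∃ K > (0:ℝ), ∀ t : ℝ, max ((n:ℝ) + 2) ((4*π) ^ p) ≤ t →
      K * t ^ (-(((n:ℝ) + 2*p - 2)/p)) ≤ ∫ r in Ioi (0:ℝ), g p n t r := by
  have hπ : (0:ℝ) < π := Real.pi_pos
  have hπ1 : (1:ℝ) < π := by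
    have := Real.pi_gt_three; linarith
  set E₀ : ℝ := Real.exp (-(4*π) ^ p) with hE₀
  set K : ℝ := (2*π)^(n-1) * ((1/2) * ((2*π) ^ p * 2⁻¹)) ^ 2 * E₀ / ((4*π)^2) * (π - 1)
    with hK
  have hK0 : 0 < K := by
    have h1 : (0:ℝ) < (2*π) ^ p := Real.rpow_pos_of_pos (by linarith) p
    have h2 : (0:ℝ) < E₀ := Real.exp_pos _
    have h3 : (0:ℝ) < (2*π:ℝ)^(n-1) := by positivity
    have h4 : (0:ℝ) < π - 1 := by linarith
    positivity
  refine ⟨K, hK0, ?_⟩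
  intro t ht
  have hn1 : (1:ℝ) ≤ n := by exact_mod_cast hn
  have htn : (n:ℝ) + 2 ≤ t := le_trans (le_max_left _ _) ht
  have ht4π : (4*π) ^ p ≤ t := le_trans (le_max_right _ _) ht
  have ht1 : (1:ℝ) ≤ t := by linarith
  have ht0 : (0:ℝ) < t := by linarith
  have hp0 : (0:ℝ) < p := by linarith
  set τ : ℝ := t ^ (-(1/p)) with hτ
  have hτ0 : 0 < τ := Real.rpow_pos_of_pos ht0 _
  set α : ℝ := 2*π*τ with hα
  set β : ℝ := 4*π*τ with hβ
  have hα0 : 0 < α := by positivity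
  have hβ0 : 0 < β := by positivity
  have hαβ : α ≤ β := by nlinarith
  have hτp : τ ^ p = t⁻¹ := by
    rw [hτ, ← Real.rpow_mul ht0.le, show -(1/p)*p = (-1:ℝ) by field_simp, Real.rpow_neg_one]
  have hαp : α ^ p = (2*π) ^ p * t⁻¹ := by
    rw [hα, Real.mul_rpow (by positivity) hτ0.le, hτp]
  have hβp : β ^ p = (4*π) ^ p * t⁻¹ := by
    rw [hβ, Real.mul_rpow (by positivity) hτ0.le, hτp]
  have hβp1 : β ^ p ≤ 1 := by
    rw [hβp]
    calc (4*π)^p * t⁻¹ ≤ t * t⁻¹ := mul_le_mul_of_nonneg_right ht4π (inv_nonneg.mpr ht0.le)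
      _ = 1 := mul_inv_cancel₀ (ne_of_gt ht0)
  have hβ1 : β ≤ 1 := by
    by_contra hcon
    push_neg at hcon
    have h2 : β ^ (1:ℝ) ≤ β ^ p := Real.rpow_le_rpow_of_exponent_le hcon.le hp
    rw [Real.rpow_one] at h2
    linarith
  have htβ : -t * β ^ p = -(4*π) ^ p := by
    rw [hβp]
    field_simp
  set m : ℝ := α ^ (n-1) * ((1/2) * (α ^ p / 2)) ^ 2 * E₀ / β ^ 2 with hm
  have hm0 : 0 ≤ m := by
    have h1 : (0:ℝ) < E₀ := Real.exp_pos _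
    positivity
  have hIg := integrableOn_g hn hp htn
  have hsub : Ioc α β ⊆ Ioi (0:ℝ) := fun x hx => lt_trans hα0 hx.1
  have step1 : ∫ r in Ioc α β, g p n t r ≤ ∫ r in Ioi (0:ℝ), g p n t r := by
    apply setIntegral_mono_set hIg
    · filter_upwards [ae_restrict_mem measurableSet_Ioi] with r hr
      exact g_nonneg p n t r (le_of_lt hr)
    · exact HasSubset.Subset.eventuallyLE hsub
  have hIls : IntegrableOn (fun r : ℝ => m * Real.sin (r * t) ^ 2) (Ioc α β) := by
    apply Continuous.integrableOn_Ioc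
    exact continuous_const.mul
      ((Real.continuous_sin.comp (continuous_id.mul continuous_const)).pow 2)
  have step2 : ∫ r in Ioc α β, m * Real.sin (r * t) ^ 2 ≤ ∫ r in Ioc α β, g p n t r := by
    apply setIntegral_mono_on hIls (hIg.mono_set hsub) measurableSet_Ioc
    intro r hr
    have hlb := g_lb (n := n) hp ht0 hα0 hr hβp1 hβ1 hαβ
    rw [htβ] at hlb
    rw [hm]
    exact hlb
  have step3 : m * ((β - α)/2 - 1/t) ≤ ∫ r in Ioc α β, m * Real.sin (r * t) ^ 2 := by
    rw [integral_const_mul]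
    exact mul_le_mul_of_nonneg_left (sin_sq_integral_lb ht0 hαβ) hm0
  have hτt : 1/t ≤ τ := by
    rw [hτ, one_div, ← Real.rpow_neg_one t]
    apply Real.rpow_le_rpow_of_exponent_le ht1
    have h1 : 1/p ≤ 1 := by
      rw [div_le_one hp0]; exact hp
    linarith
  have hS : (π - 1) * τ ≤ (β - α)/2 - 1/t := by
    have hhalf : (β - α)/2 = π * τ := by rw [hβ, hα]; ring
    rw [hhalf]
    nlinarith
  have step4 : m * ((π - 1) * τ) ≤ m * ((β - α)/2 - 1/t) := mul_le_mul_of_nonneg_left hS hm0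
  have heq : m * ((π - 1) * τ) = K * t ^ (-(((n:ℝ) + 2*p - 2)/p)) := by
    rw [← tau_pow ht0 hp hn (t := t), hm, hαp, hα, hβ, hK]
    rw [mul_pow (2*π) τ (n-1), mul_pow (4*π) τ 2, ← hτ]
    have hτne : τ ≠ 0 := ne_of_gt hτ0
    have hπne : π ≠ 0 := ne_of_gt hπ
    field_simp
  calc K * t ^ (-(((n:ℝ) + 2*p - 2)/p)) = m * ((π - 1) * τ) := heq.symm
    _ ≤ m * ((β - α)/2 - 1/t) := step4
    _ ≤ ∫ r in Ioc α β, m * Real.sin (r * t) ^ 2 := step3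
    _ ≤ ∫ r in Ioc α β, g p n t r := step2
    _ ≤ ∫ r in Ioi (0:ℝ), g p n t r := step1


end Stmt18

open MeasureTheory

/-- Lemma 4.1: for `n ≥ 1` and `θ ≥ 1/2`, with `a(ξ) = (1/2) log(1+|ξ|^{2θ})`,
`∫ a(ξ)² (1+|ξ|^{2θ})^{-t} sin²(|ξ|t)/|ξ|² dξ ≈ t^{-(n+4θ-2)/(2θ)}` for large `t`. -/
theorem stmt_18 (n : ℕ) (hn : 1 ≤ n) (θ : ℝ) (hθ : 1 / 2 ≤ θ) :
    ∃ C > (0 : ℝ), ∃ t₀ > (0 : ℝ), ∀ t ≥ t₀,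
      C⁻¹ * t ^ (-((n : ℝ) + 4 * θ - 2) / (2 * θ)) ≤
          (∫ ξ : EuclideanSpace ℝ (Fin n),
            ((1 / 2) * Real.log (1 + ‖ξ‖ ^ (2 * θ))) ^ 2 *
              Real.exp (-t * Real.log (1 + ‖ξ‖ ^ (2 * θ))) *
              Real.sin (‖ξ‖ * t) ^ 2 / ‖ξ‖ ^ 2) ∧
        (∫ ξ : EuclideanSpace ℝ (Fin n),
            ((1 / 2) * Real.log (1 + ‖ξ‖ ^ (2 * θ))) ^ 2 *
              Real.exp (-t * Real.log (1 + ‖ξ‖ ^ (2 * θ))) *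
              Real.sin (‖ξ‖ * t) ^ 2 / ‖ξ‖ ^ 2) ≤
          C * t ^ (-((n : ℝ) + 4 * θ - 2) / (2 * θ)) := by
  haveI : Nontrivial (EuclideanSpace ℝ (Fin n)) := by
    have : Nonempty (Fin n) := Fin.pos_iff_nonempty.mp hn
    infer_instance
  set p : ℝ := 2 * θ with hpdef
  have hp : 1 ≤ p := by rw [hpdef]; linarith
  have hn1 : (1:ℝ) ≤ n := by exact_mod_cast hn
  obtain ⟨M, hM0, hupper⟩ := Stmt18.upper_bound hn hp
  obtain ⟨K, hK0, hlower⟩ := Stmt18.lower_bound hn hp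
  set cn : ℝ := (n : ℝ) * (volume (Metric.ball (0 : EuclideanSpace ℝ (Fin n)) 1)).toReal
    with hcn
  have hcn0 : 0 < cn := by
    have h1 : 0 < volume (Metric.ball (0 : EuclideanSpace ℝ (Fin n)) 1) :=
      Metric.measure_ball_pos _ _ one_pos
    have h2 : volume (Metric.ball (0 : EuclideanSpace ℝ (Fin n)) 1) < ⊤ :=
      measure_ball_lt_top
    have h3 := ENNReal.toReal_pos (ne_of_gt h1) (ne_of_lt h2)
    have hn0 : (0:ℝ) < n := by linarith
    positivity
  -- the radial reduction
  have hred : ∀ t : ℝ,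
      (∫ ξ : EuclideanSpace ℝ (Fin n),
        ((1 / 2) * Real.log (1 + ‖ξ‖ ^ p)) ^ 2 *
          Real.exp (-t * Real.log (1 + ‖ξ‖ ^ p)) *
          Real.sin (‖ξ‖ * t) ^ 2 / ‖ξ‖ ^ 2) =
      cn * ∫ r in Set.Ioi (0:ℝ), Stmt18.g p n t r := by
    intro t
    have h := MeasureTheory.integral_fun_norm_addHaar
      (volume : Measure (EuclideanSpace ℝ (Fin n))) (Stmt18.f p t)
    simp only [finrank_euclideanSpace_fin, smul_eq_mul, nsmul_eq_mul] at h
    have hl : (∫ ξ : EuclideanSpace ℝ (Fin n),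
        ((1 / 2) * Real.log (1 + ‖ξ‖ ^ p)) ^ 2 *
          Real.exp (-t * Real.log (1 + ‖ξ‖ ^ p)) *
          Real.sin (‖ξ‖ * t) ^ 2 / ‖ξ‖ ^ 2) =
        ∫ ξ : EuclideanSpace ℝ (Fin n), Stmt18.f p t ‖ξ‖ := rfl
    have hr : (∫ r in Set.Ioi (0:ℝ), r ^ (n-1) * Stmt18.f p t r) =
        ∫ r in Set.Ioi (0:ℝ), Stmt18.g p n t r := rfl
    rw [hl, h, ← mul_assoc, ← hr]
    rfl
  set C : ℝ := max (cn * M) ((cn * K)⁻¹) + 1 with hC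
  have hCpos : 0 < C := by positivity
  refine ⟨C, hCpos, max (max 1 ((n:ℝ)+2)) (max ((n:ℝ)+2) ((4*Real.pi) ^ p)), ?_, ?_⟩
  · calc (0:ℝ) < 1 := one_pos
      _ ≤ max 1 ((n:ℝ)+2) := le_max_left _ _
      _ ≤ _ := le_max_left _ _
  intro t ht
  have htu : max 1 ((n:ℝ)+2) ≤ t := le_trans (le_max_left _ _) ht
  have htl : max ((n:ℝ)+2) ((4*Real.pi) ^ p) ≤ t := le_trans (le_max_right _ _) ht
  have ht1 : (1:ℝ) ≤ t := le_trans (le_max_left _ _) htu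
  have ht0 : (0:ℝ) < t := by linarith
  have hexp : t ^ (-((n : ℝ) + 4 * θ - 2) / (2 * θ)) = t ^ (-(((n:ℝ) + 2*p - 2)/p)) := by
    congr 1
    rw [hpdef]
    ring
  have hpow0 : (0:ℝ) < t ^ (-(((n:ℝ) + 2*p - 2)/p)) := Real.rpow_pos_of_pos ht0 _
  have hup := hupper t htu
  have hlo := hlower t htl
  constructor
  · rw [hred t, hexp]
    have hCK : C⁻¹ ≤ cn * K := by
      have h1 : (cn * K)⁻¹ ≤ C := by
        rw [hC]
        have := le_max_right (cn * M) ((cn * K)⁻¹)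
        linarith
      have h2 : (0:ℝ) < cn * K := by positivity
      rw [inv_le_comm₀ h2 hCpos] at h1
      exact h1
    calc C⁻¹ * t ^ (-(((n:ℝ) + 2*p - 2)/p))
        ≤ (cn * K) * t ^ (-(((n:ℝ) + 2*p - 2)/p)) :=
          mul_le_mul_of_nonneg_right hCK hpow0.le
      _ = cn * (K * t ^ (-(((n:ℝ) + 2*p - 2)/p))) := by ring
      _ ≤ cn * ∫ r in Set.Ioi (0:ℝ), Stmt18.g p n t r :=
          mul_le_mul_of_nonneg_left hlo hcn0.le
  · rw [hred t, hexp]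
    calc cn * ∫ r in Set.Ioi (0:ℝ), Stmt18.g p n t r
        ≤ cn * (M * t ^ (-(((n:ℝ) + 2*p - 2)/p))) := mul_le_mul_of_nonneg_left hup hcn0.le
      _ = (cn * M) * t ^ (-(((n:ℝ) + 2*p - 2)/p)) := by ring
      _ ≤ C * t ^ (-(((n:ℝ) + 2*p - 2)/p)) := by
          apply mul_le_mul_of_nonneg_right _ hpow0.le
          rw [hC]
          have := le_max_left (cn * M) ((cn * K)⁻¹)
          linarith
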